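/- Let (E,H,(·|·)) and (E,H,(·|·)') be two extended affine Lie algebra structures on the same Lie algebra E over a field k of characteristic 0 with the same subalgebra H, and denote by Ψ, Ψ⁰, Ψ^an and Ψ', Ψ'⁰, Ψ'^an their respective sets of roots, isotropic roots and anisotropic roots. Then Ψ = Ψ', Ψ⁰ = Ψ'⁰, and Ψ^an = Ψ'^an. -/

import Mathlib

/-! Statement 6: roots, isotropic and anisotropic roots of an EALA do not depend on the choice of invariant form. -/

section EALA

variable {k E : Type*} [Field k] [CharZero k] [LieRing E] [LieAlgebra k E]

/-- The weight space of the toral subalgebra `H` for the weight `α ∈ H*`: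
`E_α = {e ∈ E : [h,e] = α(h)e for all h ∈ H}`. -/
def wtSpace (H : LieSubalgebra k E) (α : Module.Dual k H) : Submodule k E where
  carrier := {e | ∀ h : H, ⁅(h : E), e⁆ = α h • e}
  add_mem' := by
    intro a b ha hb h
    simp only [lie_add, ha h, hb h, smul_add]
  zero_mem' := by
    intro h
    simp
  smul_mem' := by
    intro c a ha h
    rw [lie_smul, ha h, smul_comm]

/-- The set of roots `Ψ` of `(E,H)`: those `α ∈ H*` with `E_α ≠ 0` (note `0 ∈ Ψ`). -/
def rootSet (H : LieSubalgebra k E) : Set (Module.Dual k H) :=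
  {α | wtSpace H α ≠ ⊥}

variable (B : E →ₗ[k] E →ₗ[k] k)

/-- The representatives `t_α ∈ H` of `α ∈ H*` under the form: `(t_α | h) = α(h)` for `h ∈ H`. -/
def reps (H : LieSubalgebra k E) (α : Module.Dual k H) : Set H :=
  {t | ∀ h : H, B (t : E) (h : E) = α h}

/-- The anisotropic roots: `Ψ^an = {α ∈ Ψ : (α|α) ≠ 0}`. -/
def anisoRootSet (H : LieSubalgebra k E) : Set (Module.Dual k H) :=
  {α | α ∈ rootSet H ∧ ∃ t ∈ reps B H α, B (t : E) (t : E) ≠ 0}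

/-- The isotropic (null) roots: `Ψ⁰ = {α ∈ Ψ : (α|α) = 0}`. -/
def isoRootSet (H : LieSubalgebra k E) : Set (Module.Dual k H) :=
  {α | α ∈ rootSet H ∧ ∃ t ∈ reps B H α, B (t : E) (t : E) = 0}

/-- The core `E_c` of `(E, H, (·|·))`: the subalgebra of `E` generated by
`⋃_{α ∈ Ψ^an} E_α`. -/
def core (H : LieSubalgebra k E) : LieSubalgebra k E :=
  LieSubalgebra.lieSpan k E (⋃ α ∈ anisoRootSet B H, (wtSpace H α : Set E))

/-- An extended affine Lie algebra structure `(E, H, (·|·))` (paper §2.3):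
axioms (EA1)–(EA5), together with the requirements that the bilinear form is
nondegenerate, symmetric and invariant. -/
structure IsEALA (H : LieSubalgebra k E) : Prop where
  /-- the form is symmetric -/
  symm : ∀ x y : E, B x y = B y x
  /-- the form is invariant -/
  invariant : ∀ x y z : E, B ⁅x, y⁆ z = B x ⁅y, z⁆
  /-- the form is nondegenerate -/
  nondeg : ∀ x : E, (∀ y : E, B x y = 0) → x = 0
  /-- (EA1): `H` is nontrivial … -/
  H_ne_bot : H ≠ ⊥
  /-- … finite-dimensional … -/
  H_fd : FiniteDimensional k H
  /-- … self-centralizing (in particular abelian): `E_0 = H` … -/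
  self_centralizing : wtSpace H 0 = H.toSubmodule
  /-- … and toral: `E = ⊕_{α ∈ H*} E_α` -/
  toral : (⨆ α : Module.Dual k H, wtSpace H α) = ⊤
  /-- the restriction of the form to `H × H` is nondegenerate -/
  H_nondeg : ∀ t : H, (∀ h : H, B (t : E) (h : E) = 0) → t = 0
  /-- (EA2): `ad x` is locally nilpotent for `x ∈ E_α`, `α ∈ Ψ^an` -/
  ea2 : ∀ α ∈ anisoRootSet B H, ∀ x ∈ wtSpace H α, ∀ e : E,
    ∃ N : ℕ, (fun y => ⁅x, y⁆)^[N] e = 0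
  /-- (EA3): `Ψ^an` is connected -/
  ea3 : ∀ Ψ₁ Ψ₂ : Set (Module.Dual k H), anisoRootSet B H = Ψ₁ ∪ Ψ₂ →
    Ψ₁.Nonempty → Ψ₂.Nonempty →
    ∃ α ∈ Ψ₁, ∃ β ∈ Ψ₂, ∃ t ∈ reps B H α, ∃ s ∈ reps B H β, B (t : E) (s : E) ≠ 0
  /-- (EA4): the centralizer of the core is contained in the core -/
  ea4 : ∀ e : E, (∀ x ∈ core B H, ⁅e, x⁆ = 0) → e ∈ core B H
  /-- (EA5): the subgroup of `(H*,+)` generated by `Ψ⁰` is free abelian of finite rank -/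
  ea5 : ∃ n : ℕ, Nonempty ((AddSubgroup.closure (isoRootSet B H)) ≃+ (Fin n → ℤ))

end EALA

section EALAAux

set_option linter.unusedSectionVars false

variable {k E : Type*} [Field k] [CharZero k] [LieRing E] [LieAlgebra k E]
variable {B B' : E →ₗ[k] E →ₗ[k] k} {H : LieSubalgebra k E}

/-- Weight spaces for weights `α, β` with `α + β ≠ 0` are orthogonal. -/
lemma wt_orth (h : IsEALA B H) {α β : Module.Dual k H} (hne : α + β ≠ 0)
    {x z : E} (hx : x ∈ wtSpace H α) (hz : z ∈ wtSpace H β) : B x z = 0 := by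
  obtain ⟨h₀, hh₀⟩ : ∃ h₀ : H, α h₀ + β h₀ ≠ 0 := by
    by_contra hc
    push_neg at hc
    exact hne (LinearMap.ext fun t => by simpa using hc t)
  have e1 : B ⁅x, (h₀ : E)⁆ z = B x ⁅(h₀ : E), z⁆ := h.invariant x h₀ z
  rw [← lie_skew, hx h₀, hz h₀] at e1
  simp only [map_neg, map_smul, LinearMap.neg_apply, LinearMap.smul_apply,
    smul_eq_mul] at e1
  have e2 : (α h₀ + β h₀) * B x z = 0 := by linear_combination -e1
  rcases mul_eq_zero.mp e2 with h1 | h1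
  · exact absurd h1 hh₀
  · exact h1

/-- Uniqueness of representatives. -/
lemma reps_unique (h : IsEALA B H) {α : Module.Dual k H} {t s : H}
    (ht : t ∈ reps B H α) (hs : s ∈ reps B H α) : t = s := by
  have key : t - s = 0 := by
    apply h.H_nondeg
    intro h'
    have coe : ((t - s : H) : E) = (t : E) - (s : E) := rfl
    rw [coe, map_sub, LinearMap.sub_apply, ht h', hs h', sub_self]
  exact sub_eq_zero.mp key

/-- Existence of representatives. -/
lemma reps_exists (h : IsEALA B H) (α : Module.Dual k H) : ∃ t, t ∈ reps B H α := by
  haveI := h.H_fd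
  let Bres : LinearMap.BilinForm k H := B.compl₁₂ H.toSubmodule.subtype H.toSubmodule.subtype
  have ndr : Bres.Nondegenerate := ⟨fun t ht => h.H_nondeg t ht,
    fun t ht => h.H_nondeg t fun h'' => by rw [h.symm]; exact ht h''⟩
  exact ⟨(Bres.toDual ndr).symm α,
    fun h' => LinearMap.BilinForm.apply_toDual_symm_apply (B := Bres) (hB := ndr) α h'⟩

/-- Key lemma: anisotropic roots w.r.t. one EALA form are anisotropic for any other. -/
lemma aniso_subset (h : IsEALA B H) (h' : IsEALA B' H) :
    anisoRootSet B H ⊆ anisoRootSet B' H := by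
  rintro α ⟨hroot, t, ht, htt⟩
  have hαt : B (t : E) (t : E) = α t := ht t
  have htne : (t : E) ≠ 0 := fun h0 => htt (by rw [h0]; simp)
  obtain ⟨x, hx, hxne⟩ := (Submodule.ne_bot_iff _).mp hroot
  -- find `y ∈ E_{-α}` with `B x y ≠ 0`
  obtain ⟨y, hy, hBxy⟩ : ∃ y ∈ wtSpace H (-α), B x y ≠ 0 := by
    by_contra hc
    push_neg at hc
    refine hxne (h.nondeg x fun z => ?_)
    have hz : z ∈ (⨆ β : Module.Dual k H, wtSpace H β) := by rw [h.toral]; trivial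
    have hker : (⨆ β : Module.Dual k H, wtSpace H β) ≤ LinearMap.ker (B x) := by
      apply iSup_le
      intro β w hw
      rw [LinearMap.mem_ker]
      by_cases hβ : α + β = 0
      · have hβ' : β = -α := eq_neg_of_add_eq_zero_left (add_comm α β ▸ hβ)
        exact hc w (hβ' ▸ hw)
      · exact wt_orth h hβ hx hw
    exact hker hz
  -- `⁅x,y⁆` lands in `E₀ = H`
  have hz₀0 : ⁅x, y⁆ ∈ wtSpace H (0 : Module.Dual k H) := by
    intro h₁
    have leib : ⁅(h₁ : E), ⁅x, y⁆⁆ = ⁅⁅(h₁ : E), x⁆, y⁆ + ⁅x, ⁅(h₁ : E), y⁆⁆ :=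
      leibniz_lie _ _ _
    rw [hx h₁, hy h₁] at leib
    simp only [smul_lie, lie_smul, LinearMap.neg_apply, neg_smul] at leib
    simp only [LinearMap.zero_apply, zero_smul]
    rw [leib]
    simp
  have hz₀H : ⁅x, y⁆ ∈ H.toSubmodule := by rw [← h.self_centralizing]; exact hz₀0
  set h₀ : H := ⟨⁅x, y⁆, hz₀H⟩ with hh₀def
  -- for any invariant form `C`, `C ⁅x,y⁆ h₁ = α h₁ * C x y`
  have key : ∀ (C : E →ₗ[k] E →ₗ[k] k), (∀ a b c : E, C ⁅a, b⁆ c = C a ⁅b, c⁆) →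
      ∀ h₁ : H, C ⁅x, y⁆ (h₁ : E) = α h₁ * C x y := by
    intro C hC h₁
    have e2 : ⁅y, (h₁ : E)⁆ = α h₁ • y := by
      rw [← lie_skew, hy h₁]
      simp
    have e1 : C ⁅x, y⁆ (h₁ : E) = C x ⁅y, (h₁ : E)⁆ := hC x y h₁
    rw [e2, map_smul, smul_eq_mul] at e1
    exact e1
  -- `h₀ = B x y • t`
  have hh₀ : h₀ = B x y • t := by
    have key2 : h₀ - B x y • t = 0 := by
      apply h.H_nondeg
      intro h₁
      have coe : ((h₀ - B x y • t : H) : E) = ⁅x, y⁆ - B x y • (t : E) := rfl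
      rw [coe, map_sub, LinearMap.sub_apply, map_smul, LinearMap.smul_apply,
        key B h.invariant h₁, ht h₁, smul_eq_mul]
      ring
    exact sub_eq_zero.mp key2
  have hh₀ne : h₀ ≠ 0 := by
    rw [hh₀]
    exact smul_ne_zero hBxy (fun h0 => htne (by rw [h0]; rfl))
  -- `B' x y ≠ 0`
  have hB'xy : B' x y ≠ 0 := by
    intro hzero
    apply hh₀ne
    apply h'.H_nondeg
    intro h₁
    have e3 : B' ((h₀ : H) : E) (h₁ : E) = α h₁ * B' x y := key B' h'.invariant h₁
    rw [e3, hzero, mul_zero]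
  -- the representative of `α` w.r.t. `B'`
  have hrep : ((B' x y)⁻¹ • h₀ : H) ∈ reps B' H α := by
    intro h₁
    have coe : (((B' x y)⁻¹ • h₀ : H) : E) = (B' x y)⁻¹ • ⁅x, y⁆ := rfl
    rw [coe, map_smul, LinearMap.smul_apply, key B' h'.invariant h₁, smul_eq_mul]
    field_simp
  refine ⟨hroot, (B' x y)⁻¹ • h₀, hrep, ?_⟩
  rw [hrep ((B' x y)⁻¹ • h₀), map_smul, hh₀, map_smul]
  simp only [smul_eq_mul]
  rw [← hαt]
  intro hzero
  rcases mul_eq_zero.mp hzero with h1 | h1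
  · exact inv_ne_zero hB'xy h1
  · rcases mul_eq_zero.mp h1 with h2 | h2
    · exact hBxy h2
    · exact htt h2

/-- Isotropic roots w.r.t. one EALA form are isotropic for any other. -/
lemma iso_subset (h : IsEALA B H) (h' : IsEALA B' H) :
    isoRootSet B H ⊆ isoRootSet B' H := by
  rintro α ⟨hroot, t, ht, htt⟩
  obtain ⟨t', ht'⟩ := reps_exists h' α
  refine ⟨hroot, t', ht', ?_⟩
  by_contra hne
  obtain ⟨-, s, hs, hss⟩ := aniso_subset h' h ⟨hroot, t', ht', hne⟩
  rw [reps_unique h hs ht] at hss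
  exact hss htt

end EALAAux

/-- Corollary 3.3(a) of the paper: two EALA structures `(E,H,(·|·))` and
`(E,H,(·|·)')` with the same subalgebra `H` have the same roots, the same isotropic
roots and the same anisotropic roots: `Ψ = Ψ'`, `Ψ⁰ = Ψ'⁰`, `Ψ^an = Ψ'^an`. -/
theorem eala_roots_independent_of_form
    {k E : Type*} [Field k] [CharZero k] [LieRing E] [LieAlgebra k E]
    (B : E →ₗ[k] E →ₗ[k] k) (H : LieSubalgebra k E) (h : IsEALA B H)
    (B' : E →ₗ[k] E →ₗ[k] k) (h' : IsEALA B' H) :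
    rootSet (k := k) H = rootSet (k := k) H ∧
    isoRootSet B H = isoRootSet B' H ∧
    anisoRootSet B H = anisoRootSet B' H := by
  exact ⟨rfl, Set.Subset.antisymm (iso_subset h h') (iso_subset h' h),
    Set.Subset.antisymm (aniso_subset h h') (aniso_subset h' h)⟩
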